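/- (Hommel's inequality as a special case.) Let p_1, …, p_m be arbitrary [0,1]-valued random variables with P(p_i ≤ t) ≤ t for all t and all i (all hypotheses true). Let C_m = Σ_{i=1}^m 1/i. Let R = {i : p_i ≤ α i_max / (m C_m)} be the step-up procedure with threshold collection Δ(i,r) = α r/(m C_m): that is, with p_(1) ≤ … ≤ p_(m) the order statistics, r̂ = max{r ∈ {0,…,m} : p_(r) ≤ α r/(m C_m)} (p_(0)=0) and R rejects the r̂ smallest p-values. Then P(R ≠ ∅) ≤ α. -/

import Mathlib

open MeasureTheory ENNReal Finset

private lemma hommel_telescope (f : ℕ → ℝ) :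
    ∀ m k : ℕ, k ≤ m → ∑ x ∈ Finset.Ico k m, (f x - f (x+1)) = f k - f m := by
  intro m
  induction m with
  | zero => intro k hk; interval_cases k; simp
  | succ n ih =>
    intro k hk
    rcases Nat.lt_or_ge k (n+1) with h1 | h2
    · have hkn : k ≤ n := Nat.lt_succ_iff.mp h1
      rw [Finset.sum_Ico_succ_top hkn, ih k hkn]; ring
    · have : k = n + 1 := le_antisymm hk h2
      subst this; simp

/-- Hommel's inequality as a special case: if all `m` null hypotheses are true
and `R` is the step-up procedure with threshold collection
`Δ(i,r) = α r / (m C_m)` where `C_m = Σ_{i=1}^m 1/i`, then under arbitrary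
dependence `P(R ≠ ∅) ≤ α`. -/
theorem hommel_inequality_special_case
    {Ω : Type*} [MeasurableSpace Ω] (P : Measure Ω) [IsProbabilityMeasure P]
    (m : ℕ) (hm : 1 ≤ m) (α : ℝ) (hα : 0 < α)
    (p : Fin m → Ω → ℝ) (hp : ∀ i, Measurable (p i))
    (hprange : ∀ i ω, p i ω ∈ Set.Icc (0:ℝ) 1)
    (hUnif : ∀ i, ∀ t : ℝ, 0 ≤ t → t ≤ 1 →
      P {ω | p i ω ≤ t} ≤ ENNReal.ofReal t)
    (Cm : ℝ) (hCm : Cm = ∑ i ∈ Finset.Icc 1 m, (1 : ℝ) / i)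
    -- R is the step-up procedure with threshold collection Δ(i,r) = α r/(m C_m)
    (rhat : Ω → ℕ) (R : Ω → Finset (Fin m))
    (hR : ∀ ω, R ω = Finset.univ.filter
      (fun i => p i ω ≤ α * (rhat ω : ℝ) / (m * Cm)))
    (hrhatle : ∀ ω, rhat ω ≤ m)
    (hrhatmem : ∀ ω, rhat ω ≤ (Finset.univ.filter
      (fun i => p i ω ≤ α * (rhat ω : ℝ) / (m * Cm))).card)
    (hrhatmax : ∀ ω, ∀ r : ℕ, r ≤ m →
      r ≤ (Finset.univ.filter
        (fun i => p i ω ≤ α * (r : ℝ) / (m * Cm))).card → r ≤ rhat ω) :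
    P {ω | R ω ≠ ∅} ≤ ENNReal.ofReal α := by
  have hm0 : (0:ℝ) < m := by exact_mod_cast hm
  have hCm1 : (1:ℝ) ≤ Cm := by
    rw [hCm]
    have h1m : (1:ℕ) ∈ Finset.Icc 1 m := by simp [hm]
    have := Finset.single_le_sum (f := fun i : ℕ => (1:ℝ)/i)
      (fun i _ => by positivity) h1m
    simpa using this
  have hCm0 : (0:ℝ) < Cm := lt_of_lt_of_le one_pos hCm1
  set c : ℝ := α / (m * Cm) with hc
  have hc0 : 0 < c := by positivity
  -- the weights
  set wr : ℕ → ℝ := fun x => if x = m then 1/(m:ℝ) else 1/(x:ℝ) - 1/((x:ℝ)+1)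
    with hwrdef
  have hwr_nonneg : ∀ x, 1 ≤ x → 0 ≤ wr x := by
    intro x hx
    have hx0 : (0:ℝ) < x := by exact_mod_cast hx
    by_cases h : x = m
    · simp only [hwrdef, h, if_pos rfl]; positivity
    · simp only [hwrdef, if_neg h]
      rw [sub_nonneg]
      apply one_div_le_one_div_of_le hx0; linarith
  -- tail sums of the weights
  have hwr_tail : ∀ k, 1 ≤ k → k ≤ m → ∑ x ∈ Finset.Icc k m, wr x = 1/(k:ℝ) := by
    intro k hk1 hkm
    have hk0 : (0:ℝ) < k := by exact_mod_cast hk1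
    rw [← Finset.Ico_add_one_right_eq_Icc, Finset.sum_Ico_succ_top hkm]
    have h1 : ∑ x ∈ Finset.Ico k m, wr x
        = ∑ x ∈ Finset.Ico k m, ((fun y : ℕ => 1/(y:ℝ)) x - (fun y : ℕ => 1/(y:ℝ)) (x+1)) := by
      apply Finset.sum_congr rfl
      intro x hx
      have hxm : x ≠ m := by
        rw [Finset.mem_Ico] at hx; omega
      simp only [hwrdef, if_neg hxm]
      push_cast; ring_nf
    rw [h1, hommel_telescope _ m k hkm]
    simp only [hwrdef, if_pos rfl]
    ring
  -- weighted sum of the weights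
  have hwr_weighted : ∑ x ∈ Finset.Icc 1 m, (x:ℝ) * wr x = Cm := by
    rw [← Finset.Ico_add_one_right_eq_Icc, Finset.sum_Ico_succ_top hm]
    have h1 : ∑ x ∈ Finset.Ico 1 m, (x:ℝ) * wr x
        = ∑ x ∈ Finset.Ico 1 m, 1/((x:ℝ)+1) := by
      apply Finset.sum_congr rfl
      intro x hx
      rw [Finset.mem_Ico] at hx
      have hxm : x ≠ m := by omega
      have hx0 : (0:ℝ) < x := by exact_mod_cast hx.1
      simp only [hwrdef, if_neg hxm]
      field_simp
      ring
    have h2 : ∑ x ∈ Finset.Ico 1 m, 1/((x:ℝ)+1) = ∑ x ∈ Finset.Icc 2 m, 1/(x:ℝ) := by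
      rw [← Finset.Ico_add_one_right_eq_Icc, Finset.sum_Ico_eq_sum_range, Finset.sum_Ico_eq_sum_range]
      have : m + 1 - 2 = m - 1 := by omega
      rw [this]
      apply Finset.sum_congr rfl
      intro i _
      push_cast; ring_nf
    have h3 : (m:ℝ) * wr m = 1 := by
      simp only [hwrdef, if_pos rfl]
      field_simp
    rw [h1, h2, h3, hCm]
    have h4 : Finset.Icc 1 m = insert 1 (Finset.Icc 2 m) := by
      ext x
      simp only [Finset.mem_Icc, Finset.mem_insert]
      omega
    have h5 : (1:ℕ) ∉ Finset.Icc 2 m := by simp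
    rw [h4, Finset.sum_insert h5]
    push_cast
    ring
  -- the events and the dominating function
  set A : Fin m → ℕ → Set Ω := fun i x => {ω | p i ω ≤ c * x} with hA
  have hAmeas : ∀ i x, MeasurableSet (A i x) :=
    fun i x => measurableSet_le (hp i) measurable_const
  set f : Ω → ℝ≥0∞ := fun ω => ∑ i : Fin m, ∑ x ∈ Finset.Icc 1 m,
      (A i x).indicator (fun _ => ENNReal.ofReal (wr x)) ω with hf
  have hfmeas : Measurable f := by
    apply Finset.measurable_sum
    intro i _
    apply Finset.measurable_sum
    intro x _
    exact Measurable.indicator measurable_const (hAmeas i x)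
  -- pointwise bound
  have hpoint : ∀ ω, R ω ≠ ∅ → 1 ≤ f ω := by
    intro ω hω
    obtain ⟨k', hk1, hk2, S, hScard, hSle⟩ :
        ∃ k', 1 ≤ k' ∧ k' ≤ m ∧ ∃ S : Finset (Fin m),
          k' ≤ S.card ∧ ∀ i ∈ S, p i ω ≤ c * k' := by
      rcases Nat.eq_zero_or_pos (rhat ω) with h0 | hpos
      · rw [hR ω] at hω
        obtain ⟨i, hi⟩ := Finset.nonempty_iff_ne_empty.mpr hω
        rw [Finset.mem_filter] at hi
        refine ⟨1, le_refl 1, hm, {i}, by simp, ?_⟩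
        intro j hj
        rw [Finset.mem_singleton] at hj; subst hj
        have hi0 : p j ω ≤ 0 := by
          have h := hi.2
          rw [h0] at h
          simpa using h
        have : (0:ℝ) ≤ c * 1 := by positivity
        push_cast
        linarith
      · refine ⟨rhat ω, hpos, hrhatle ω,
          Finset.univ.filter (fun i => p i ω ≤ α * (rhat ω : ℝ) / (m * Cm)),
          hrhatmem ω, ?_⟩
        intro i hi
        rw [Finset.mem_filter] at hi
        have : α * (rhat ω : ℝ) / (m * Cm) = c * rhat ω := by rw [hc]; ring
        linarith [hi.2]
    have hk0 : (0:ℝ) < k' := by exact_mod_cast hk1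
    -- inner bound for i ∈ S
    have hinner : ∀ i ∈ S, ENNReal.ofReal (1/(k':ℝ)) ≤
        ∑ x ∈ Finset.Icc 1 m, (A i x).indicator (fun _ => ENNReal.ofReal (wr x)) ω := by
      intro i hi
      have hsub : Finset.Icc k' m ⊆ Finset.Icc 1 m := by
        apply Finset.Icc_subset_Icc_left hk1
      calc ENNReal.ofReal (1/(k':ℝ))
          = ENNReal.ofReal (∑ x ∈ Finset.Icc k' m, wr x) := by rw [hwr_tail k' hk1 hk2]
        _ = ∑ x ∈ Finset.Icc k' m, ENNReal.ofReal (wr x) := by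
            apply ENNReal.ofReal_sum_of_nonneg
            intro x hx
            rw [Finset.mem_Icc] at hx
            exact hwr_nonneg x (hk1.trans hx.1)
        _ = ∑ x ∈ Finset.Icc k' m, (A i x).indicator (fun _ => ENNReal.ofReal (wr x)) ω := by
            apply Finset.sum_congr rfl
            intro x hx
            rw [Finset.mem_Icc] at hx
            have hmem : ω ∈ A i x := by
              simp only [hA, Set.mem_setOf_eq]
              have hcx : c * (k':ℝ) ≤ c * (x:ℝ) := by
                apply mul_le_mul_of_nonneg_left _ hc0.le
                exact_mod_cast hx.1
              linarith [hSle i hi]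
            rw [Set.indicator_of_mem hmem]
        _ ≤ ∑ x ∈ Finset.Icc 1 m, (A i x).indicator (fun _ => ENNReal.ofReal (wr x)) ω :=
            Finset.sum_le_sum_of_subset hsub
    calc (1:ℝ≥0∞) = ENNReal.ofReal ((k':ℝ) * (1/(k':ℝ))) := by
          rw [mul_one_div, div_self hk0.ne', ENNReal.ofReal_one]
          
      _ = ENNReal.ofReal (k':ℝ) * ENNReal.ofReal (1/(k':ℝ)) := by
          rw [ENNReal.ofReal_mul hk0.le]
      _ = (k' : ℝ≥0∞) * ENNReal.ofReal (1/(k':ℝ)) := by rw [ENNReal.ofReal_natCast]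
      _ ≤ (S.card : ℝ≥0∞) * ENNReal.ofReal (1/(k':ℝ)) := by
          have hcast : (k' : ℝ≥0∞) ≤ (S.card : ℝ≥0∞) := by exact_mod_cast hScard
          exact mul_le_mul_left hcast _
      _ = ∑ _i ∈ S, ENNReal.ofReal (1/(k':ℝ)) := by
          rw [Finset.sum_const, nsmul_eq_mul]
      _ ≤ ∑ i ∈ S, ∑ x ∈ Finset.Icc 1 m,
            (A i x).indicator (fun _ => ENNReal.ofReal (wr x)) ω :=
          Finset.sum_le_sum hinner
      _ ≤ f ω := Finset.sum_le_sum_of_subset (Finset.subset_univ S)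
  -- from the pointwise bound to the measure bound
  have h1 : P {ω | R ω ≠ ∅} ≤ ∫⁻ ω, f ω ∂P := by
    calc P {ω | R ω ≠ ∅} ≤ P {ω | 1 ≤ f ω} := measure_mono (fun ω hω => hpoint ω hω)
      _ = 1 * P {ω | 1 ≤ f ω} := (one_mul _).symm
      _ ≤ ∫⁻ ω, f ω ∂P := mul_meas_ge_le_lintegral₀ hfmeas.aemeasurable 1
  -- computing and bounding the integral
  have hPA : ∀ (i : Fin m), ∀ x ∈ Finset.Icc 1 m,
      P (A i x) ≤ ENNReal.ofReal (min (c * x) 1) := by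
    intro i x hx
    rw [Finset.mem_Icc] at hx
    have hcx0 : 0 ≤ c * (x:ℝ) := by positivity
    rcases le_or_gt (c * (x:ℝ)) 1 with hle | hlt
    · rw [min_eq_left hle]
      exact hUnif i (c * x) hcx0 hle
    · rw [min_eq_right hlt.le]
      calc P (A i x) ≤ 1 := prob_le_one
        _ = ENNReal.ofReal 1 := ENNReal.ofReal_one.symm
  have h2 : ∫⁻ ω, f ω ∂P ≤ ENNReal.ofReal α := by
    have hint : ∫⁻ ω, f ω ∂P = ∑ i : Fin m, ∑ x ∈ Finset.Icc 1 m,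
        ENNReal.ofReal (wr x) * P (A i x) := by
      rw [hf]
      rw [lintegral_finset_sum _ (fun i _ => by
        apply Finset.measurable_sum
        intro x _
        exact Measurable.indicator measurable_const (hAmeas i x))]
      apply Finset.sum_congr rfl
      intro i _
      rw [lintegral_finset_sum _ (fun x _ =>
        Measurable.indicator measurable_const (hAmeas i x))]
      apply Finset.sum_congr rfl
      intro x _
      exact lintegral_indicator_const (hAmeas i x) _
    rw [hint]
    have hstep : ∀ (i : Fin m), ∑ x ∈ Finset.Icc 1 m, ENNReal.ofReal (wr x) * P (A i x)
        ≤ ENNReal.ofReal (α / m) := by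
      intro i
      have hsum : ∑ x ∈ Finset.Icc 1 m, wr x * (c * x) = α / m := by
        have : ∑ x ∈ Finset.Icc 1 m, wr x * (c * x)
            = c * ∑ x ∈ Finset.Icc 1 m, (x:ℝ) * wr x := by
          rw [Finset.mul_sum]
          apply Finset.sum_congr rfl
          intro x _
          ring
        rw [this, hwr_weighted, hc]
        field_simp
      calc ∑ x ∈ Finset.Icc 1 m, ENNReal.ofReal (wr x) * P (A i x)
          ≤ ∑ x ∈ Finset.Icc 1 m, ENNReal.ofReal (wr x * (c * x)) := by
            apply Finset.sum_le_sum
            intro x hx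
            rw [Finset.mem_Icc] at hx
            calc ENNReal.ofReal (wr x) * P (A i x)
                ≤ ENNReal.ofReal (wr x) * ENNReal.ofReal (min (c * x) 1) := by
                  gcongr
                  exact hPA i x (Finset.mem_Icc.mpr hx)
              _ = ENNReal.ofReal (wr x * min (c * x) 1) := by
                  rw [ENNReal.ofReal_mul (hwr_nonneg x hx.1)]
              _ ≤ ENNReal.ofReal (wr x * (c * x)) := by
                  apply ENNReal.ofReal_le_ofReal
                  apply mul_le_mul_of_nonneg_left (min_le_left _ _) (hwr_nonneg x hx.1)
        _ = ENNReal.ofReal (∑ x ∈ Finset.Icc 1 m, wr x * (c * x)) := by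
            rw [ENNReal.ofReal_sum_of_nonneg]
            intro x hx
            rw [Finset.mem_Icc] at hx
            have := hwr_nonneg x hx.1
            positivity
        _ = ENNReal.ofReal (α / m) := by rw [hsum]
    calc ∑ i : Fin m, ∑ x ∈ Finset.Icc 1 m, ENNReal.ofReal (wr x) * P (A i x)
        ≤ ∑ _i : Fin m, ENNReal.ofReal (α / m) := Finset.sum_le_sum (fun i _ => hstep i)
      _ = (m : ℝ≥0∞) * ENNReal.ofReal (α / m) := by
          rw [Finset.sum_const, nsmul_eq_mul, Finset.card_univ, Fintype.card_fin]
      _ = ENNReal.ofReal ((m:ℝ) * (α / m)) := by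
          rw [ENNReal.ofReal_mul (by positivity), ENNReal.ofReal_natCast]
      _ = ENNReal.ofReal α := by
          congr 1
          field_simp
  exact h1.trans h2
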